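/- For every positive integer n and real s > 1, the ordinary multiple zeta value satisfies the Newton recurrence n\,\zeta(\{s\}^n) = \sum_{k=1}^n (-1)^{k+1} \zeta(\{s\}^{n-k}) \zeta(ks). -/

import Mathlib

noncomputable def rzeta (s : ℝ) : ℝ := ∑' k : ℕ+, 1 / ((k : ℕ) : ℝ) ^ s

noncomputable def mzvRep (s : ℝ) (n : ℕ) : ℝ :=
  ∑' k : {f : Fin n → ℕ // StrictAnti f ∧ ∀ i, 0 < f i},
    ∏ i, 1 / ((k.1 i : ℕ) : ℝ) ^ s

open Finset Filter

namespace MzvAux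

noncomputable def aa (s : ℝ) (j : ℕ) : ℝ := 1 / (j : ℝ) ^ s

lemma aa_nonneg (s : ℝ) (j : ℕ) : 0 ≤ aa s j := by
  unfold aa; positivity

lemma aa_summable {s : ℝ} (hs : 1 < s) : Summable (aa s) :=
  Real.summable_one_div_nat_rpow.2 hs

lemma aa_le_one {s : ℝ} (hs : 1 < s) (j : ℕ) : aa s j ≤ 1 := by
  unfold aa
  rcases Nat.eq_zero_or_pos j with h | h
  · simp [h, Real.zero_rpow (by linarith : s ≠ 0)]
  · rw [div_le_one (by positivity)]
    · exact Real.one_le_rpow (by exact_mod_cast h) (by linarith)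

lemma summF {s : ℝ} (hs : 1 < s) : ∀ n, Summable (fun f : Fin n → ℕ => ∏ i, aa s (f i))
  | 0 => by
      have : (fun f : Fin 0 → ℕ => ∏ i, aa s (f i)) = fun _ => 1 := by
        funext f; simp
      rw [this]; exact .of_finite
  | (n+1) => by
      have h := ((aa_summable hs).mul_of_nonneg (summF hs n)
        (fun j => aa_nonneg s j) (fun f => Finset.prod_nonneg fun i _ => aa_nonneg s _))
      rw [← Equiv.summable_iff (Fin.consEquiv (fun _ : Fin (n+1) => ℕ))]
      refine h.congr fun p => ?_
      simp only [Function.comp_apply, Fin.consEquiv_apply, Fin.prod_univ_succ, Fin.cons_zero,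
        Fin.cons_succ]

end MzvAux

namespace MzvAux

lemma newton_fin {N : ℕ} (x : Fin N → ℝ) (n : ℕ) :
    (n : ℝ) * (∑ u ∈ powersetCard n (univ : Finset (Fin N)), ∏ i ∈ u, x i)
      = ∑ k ∈ Icc 1 n, (-1 : ℝ) ^ (k + 1) *
          (∑ u ∈ powersetCard (n - k) (univ : Finset (Fin N)), ∏ i ∈ u, x i) *
          (∑ i, x i ^ k) := by
  have h := congrArg (MvPolynomial.eval x) (MvPolynomial.mul_esymm_eq_sum (Fin N) ℝ n)
  simp only [map_mul, map_natCast, map_sum, map_pow, map_neg, map_one, MvPolynomial.esymm,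
    MvPolynomial.psum, map_prod, MvPolynomial.eval_X] at h
  rw [h, Finset.mul_sum]
  refine Finset.sum_nbij' (fun p => p.2) (fun k => (n - k, k)) ?_ ?_ ?_ ?_ ?_
  · intro p hp
    simp only [mem_filter, Finset.HasAntidiagonal.mem_antidiagonal] at hp
    simp only [mem_Icc]
    omega
  · intro k hk
    simp only [mem_Icc] at hk
    simp only [mem_filter, Finset.HasAntidiagonal.mem_antidiagonal]
    omega
  · intro p hp
    simp only [mem_filter, Finset.HasAntidiagonal.mem_antidiagonal] at hp
    have : n - p.2 = p.1 := by omega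
    simp [this]
  · intro k hk; rfl
  · intro p hp
    simp only [mem_filter, Finset.HasAntidiagonal.mem_antidiagonal] at hp
    rw [show n - p.2 = p.1 by omega, ← mul_assoc, ← mul_assoc, ← pow_add,
      show (n + 1) + p.1 = 2 * p.1 + (p.2 + 1) by omega, pow_add, pow_mul, neg_one_sq, one_pow,
      one_mul]

end MzvAux

namespace MzvAux

noncomputable def vset (m N : ℕ) :
    Finset {f : Fin m → ℕ // StrictAnti f ∧ ∀ i, 0 < f i} :=
  @Finset.subtype _ _ (Classical.decPred _) (Fintype.piFinset fun _ : Fin m => Finset.Icc 1 N)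

lemma mem_vset {m N : ℕ} {x : {f : Fin m → ℕ // StrictAnti f ∧ ∀ i, 0 < f i}} :
    x ∈ vset m N ↔ ∀ i, x.1 i ∈ Finset.Icc 1 N := by
  rw [vset]
  rw [@Finset.mem_subtype _ _ (Classical.decPred _), Fintype.mem_piFinset]

lemma strictAnti_eq_of_image_eq {m : ℕ} {f g : Fin m → ℕ} (hf : StrictAnti f) (hg : StrictAnti g)
    (h : Finset.image f univ = Finset.image g univ) : f = g := by
  have hcard : (Finset.image f univ).card = m := by
    rw [Finset.card_image_of_injective _ hf.injective, card_univ, Fintype.card_fin]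
  have h1 : f ∘ Fin.rev = (Finset.image f univ).orderEmbOfFin hcard :=
    Finset.orderEmbOfFin_unique _ (fun i => Finset.mem_image_of_mem _ (mem_univ _))
      (fun i j hij => hf (Fin.rev_lt_rev.2 hij))
  have h2 : g ∘ Fin.rev = (Finset.image f univ).orderEmbOfFin hcard :=
    Finset.orderEmbOfFin_unique _ (fun i => h ▸ Finset.mem_image_of_mem _ (mem_univ _))
      (fun i j hij => hg (Fin.rev_lt_rev.2 hij))
  funext i
  have := congrFun (h1.trans h2.symm) i.rev
  simpa [Fin.rev_rev] using this

end MzvAux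

namespace MzvAux

lemma sum_vset_eq (b : ℕ → ℝ) (m N : ℕ) :
    ∑ x ∈ vset m N, ∏ i, b (x.1 i)
      = ∑ u ∈ powersetCard m (univ : Finset (Fin N)), ∏ i ∈ u, b ((i : ℕ) + 1) := by
  classical
  have himg : ∀ x : {f : Fin m → ℕ // StrictAnti f ∧ ∀ i, 0 < f i}, x ∈ vset m N →
      ∃ g : Fin m → Fin N, Function.Injective g ∧ (∀ i0, (g i0 : ℕ) + 1 = x.1 i0) ∧
        (univ.filter fun i : Fin N => ((i : ℕ) + 1) ∈ Finset.image x.1 univ)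
          = Finset.image g univ := by
    intro x hx
    have hb : ∀ i0 : Fin m, x.1 i0 - 1 < N := by
      intro i0
      have := mem_vset.1 hx i0
      rw [Finset.mem_Icc] at this
      omega
    have h1 : ∀ i0 : Fin m, 1 ≤ x.1 i0 := fun i0 => x.2.2 i0
    refine ⟨fun i0 => ⟨x.1 i0 - 1, hb i0⟩, ?_, ?_, ?_⟩
    · intro i0 i1 hii
      have : x.1 i0 - 1 = x.1 i1 - 1 := congrArg Fin.val hii
      exact x.2.1.injective (by have := h1 i0; have := h1 i1; omega)
    · intro i0; have := h1 i0; simp; omega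
    · ext i
      constructor
      · intro hi
        rw [Finset.mem_filter] at hi
        rcases Finset.mem_image.1 hi.2 with ⟨i0, -, hi0⟩
        refine Finset.mem_image.2 ⟨i0, mem_univ _, ?_⟩
        apply Fin.ext
        show x.1 i0 - 1 = (i : ℕ)
        omega
      · intro hi
        rcases Finset.mem_image.1 hi with ⟨i0, -, hi0⟩
        rw [Finset.mem_filter]
        refine ⟨mem_univ _, Finset.mem_image.2 ⟨i0, mem_univ _, ?_⟩⟩
        have h2 : x.1 i0 - 1 = (i : ℕ) := congrArg Fin.val hi0
        have := h1 i0
        omega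
  refine Finset.sum_bij
    (fun x _ => univ.filter fun i : Fin N => ((i : ℕ) + 1) ∈ Finset.image x.1 univ)
    ?_ ?_ ?_ ?_
  · -- maps into powersetCard
    intro x hx
    obtain ⟨g, hginj, hgval, hgeq⟩ := himg x hx
    show (univ.filter fun i : Fin N => ((i : ℕ) + 1) ∈ Finset.image x.1 univ)
      ∈ powersetCard m (univ : Finset (Fin N))
    rw [Finset.mem_powersetCard]
    refine ⟨(Finset.filter_subset _ _).trans (Finset.Subset.refl _), ?_⟩
    rw [hgeq, Finset.card_image_of_injective _ hginj, card_univ, Fintype.card_fin]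
  · -- injective
    intro x hx x' hx' heq
    replace heq : (univ.filter fun i : Fin N => ((i : ℕ) + 1) ∈ Finset.image x.1 univ)
        = (univ.filter fun i : Fin N => ((i : ℕ) + 1) ∈ Finset.image x'.1 univ) := heq
    obtain ⟨g, hginj, hgval, hgeq⟩ := himg x hx
    obtain ⟨g', hginj', hgval', hgeq'⟩ := himg x' hx'
    have himeq : Finset.image x.1 univ = Finset.image x'.1 univ := by
      ext j
      constructor
      · intro hj
        rcases Finset.mem_image.1 hj with ⟨i0, -, rfl⟩
        have hmem : g i0 ∈ univ.filter
            fun i : Fin N => ((i : ℕ) + 1) ∈ Finset.image x'.1 univ := by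
          rw [← heq, hgeq]
          exact Finset.mem_image_of_mem _ (mem_univ _)
        rw [Finset.mem_filter] at hmem
        rw [← hgval i0]
        exact hmem.2
      · intro hj
        rcases Finset.mem_image.1 hj with ⟨i0, -, rfl⟩
        have hmem : g' i0 ∈ univ.filter
            fun i : Fin N => ((i : ℕ) + 1) ∈ Finset.image x.1 univ := by
          rw [heq, hgeq']
          exact Finset.mem_image_of_mem _ (mem_univ _)
        rw [Finset.mem_filter] at hmem
        rw [← hgval' i0]
        exact hmem.2
    exact Subtype.ext (strictAnti_eq_of_image_eq x.2.1 x'.2.1 himeq)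
  · -- surjective
    intro u hu
    rw [Finset.mem_powersetCard] at hu
    obtain ⟨-, hcard⟩ := hu
    set e := u.orderEmbOfFin hcard with he
    have hanti : StrictAnti fun i0 : Fin m => ((e i0.rev : Fin N) : ℕ) + 1 := by
      intro i0 i1 h01
      have h2 : e i1.rev < e i0.rev := e.strictMono (Fin.rev_lt_rev.2 h01)
      have h3 : (e i1.rev : ℕ) < (e i0.rev : ℕ) := h2
      show ((e i1.rev : Fin N) : ℕ) + 1 < ((e i0.rev : Fin N) : ℕ) + 1
      omega
    refine ⟨⟨fun i0 => ((e i0.rev : Fin N) : ℕ) + 1, hanti, fun i0 => Nat.succ_pos _⟩, ?_, ?_⟩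
    · rw [mem_vset]
      intro i0
      rw [Finset.mem_Icc]
      exact ⟨Nat.succ_le_succ (Nat.zero_le _), Nat.succ_le_of_lt (e i0.rev).2⟩
    · show (univ.filter fun i : Fin N =>
          ((i : ℕ) + 1) ∈ Finset.image (fun i0 : Fin m => ((e i0.rev : Fin N) : ℕ) + 1) univ) = u
      ext i
      constructor
      · intro hi
        rw [Finset.mem_filter] at hi
        rcases Finset.mem_image.1 hi.2 with ⟨i0, -, hi0⟩
        have h3 : ((e i0.rev : Fin N) : ℕ) + 1 = (i : ℕ) + 1 := hi0
        have h4 : e i0.rev = i := Fin.ext (by omega)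
        rw [← h4]
        exact Finset.orderEmbOfFin_mem _ _ _
      · intro hi
        rw [Finset.mem_filter]
        refine ⟨mem_univ _, ?_⟩
        have h5 : i ∈ Set.range ⇑e := by rw [he, Finset.range_orderEmbOfFin]; exact hi
        rcases h5 with ⟨i1, hi1⟩
        refine Finset.mem_image.2 ⟨i1.rev, mem_univ _, ?_⟩
        show ((e i1.rev.rev : Fin N) : ℕ) + 1 = (i : ℕ) + 1
        rw [Fin.rev_rev, hi1]
  · -- values
    intro x hx
    obtain ⟨g, hginj, hgval, hgeq⟩ := himg x hx
    show ∏ i, b (x.1 i)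
      = ∏ i ∈ (univ.filter fun i : Fin N => ((i : ℕ) + 1) ∈ Finset.image x.1 univ), b ((i : ℕ) + 1)
    rw [hgeq, Finset.prod_image (fun i0 _ i1 _ h => hginj h)]
    exact Finset.prod_congr rfl fun i0 _ => by rw [hgval i0]

end MzvAux

namespace MzvAux

lemma tendsto_A {s : ℝ} (hs : 1 < s) (m : ℕ) :
    Filter.Tendsto
      (fun N => ∑ u ∈ powersetCard m (univ : Finset (Fin N)), ∏ i ∈ u, aa s ((i : ℕ) + 1))
      atTop (nhds (mzvRep s m)) := by
  have hg : Summable (fun x : {f : Fin m → ℕ // StrictAnti f ∧ ∀ i, 0 < f i} =>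
      ∏ i, aa s (x.1 i)) :=
    (summF hs m).comp_injective Subtype.val_injective
  have hmono : Monotone (fun N => vset m N) := by
    intro N M hNM x hx
    rw [mem_vset] at hx ⊢
    intro i
    have := hx i
    rw [Finset.mem_Icc] at this ⊢
    omega
  have hexh : ∀ x, ∃ N, x ∈ vset m N := by
    intro x
    refine ⟨Finset.univ.sup x.1, ?_⟩
    rw [mem_vset]
    intro i
    rw [Finset.mem_Icc]
    exact ⟨x.2.2 i, Finset.le_sup (mem_univ i)⟩
  have hv := tendsto_atTop_finset_of_monotone hmono hexh
  have hts : Filter.Tendsto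
      (fun F : Finset {f : Fin m → ℕ // StrictAnti f ∧ ∀ i, 0 < f i} => ∑ x ∈ F, ∏ i, aa s (x.1 i))
      atTop (nhds (∑' x : {f : Fin m → ℕ // StrictAnti f ∧ ∀ i, 0 < f i}, ∏ i, aa s (x.1 i))) :=
    hg.hasSum
  have hcomp := Filter.Tendsto.comp hts hv
  have hmz : mzvRep s m
      = ∑' x : {f : Fin m → ℕ // StrictAnti f ∧ ∀ i, 0 < f i}, ∏ i, aa s (x.1 i) := rfl
  rw [hmz]
  exact Filter.Tendsto.congr (fun N => sum_vset_eq (aa s) m N) hcomp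

lemma tendsto_P {s : ℝ} (hs : 1 < s) (k : ℕ) (hk : 1 ≤ k) :
    Filter.Tendsto (fun N => ∑ i : Fin N, aa s ((i : ℕ) + 1) ^ k) atTop
      (nhds (rzeta ((k : ℝ) * s))) := by
  have hterm : ∀ j : ℕ, 1 / (j : ℝ) ^ ((k : ℝ) * s) = aa s j ^ k := by
    intro j
    have h2 : ((j : ℝ) ^ s) ^ (k : ℕ) = (j : ℝ) ^ ((k : ℝ) * s) := by
      rw [← Real.rpow_natCast ((j : ℝ) ^ s) k, ← Real.rpow_mul (Nat.cast_nonneg j), mul_comm]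
    rw [aa, div_pow, one_pow, h2]
  have hsumm : Summable (fun j : ℕ => aa s (j + 1) ^ k) := by
    refine Summable.of_nonneg_of_le (fun j => pow_nonneg (aa_nonneg s _) k) (fun j => ?_)
      ((aa_summable hs).comp_injective Nat.succ_injective)
    calc aa s (j + 1) ^ k ≤ aa s (j + 1) ^ 1 :=
          pow_le_pow_of_le_one (aa_nonneg s _) (aa_le_one hs _) hk
      _ = aa s (j + 1) := pow_one _
  have heq : rzeta ((k : ℝ) * s) = ∑' j : ℕ, aa s (j + 1) ^ k := by
    rw [rzeta]
    rw [show (fun j : ℕ+ => 1 / ((j : ℕ) : ℝ) ^ ((k : ℝ) * s))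
        = fun j : ℕ+ => aa s (j : ℕ) ^ k from funext fun j => hterm _]
    rw [← Equiv.tsum_eq Equiv.pnatEquivNat.symm (fun j : ℕ+ => aa s (j : ℕ) ^ k)]
    exact tsum_congr fun j => rfl
  have hhs : HasSum (fun j : ℕ => aa s (j + 1) ^ k) (rzeta ((k : ℝ) * s)) := by
    rw [heq]; exact hsumm.hasSum
  refine Filter.Tendsto.congr (fun N => ?_) hhs.tendsto_sum_nat
  exact (Fin.sum_univ_eq_sum_range (fun i => aa s (i + 1) ^ k) N).symm

end MzvAux

theorem mzv_newton_recurrence (s : ℝ) (hs : 1 < s) (n : ℕ) (hn : 0 < n) :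
    (n : ℝ) * mzvRep s n
      = ∑ k ∈ Finset.Icc 1 n, (-1 : ℝ) ^ (k + 1) * mzvRep s (n - k) *
          rzeta ((k : ℝ) * s) := by
  have h1 : Filter.Tendsto
      (fun N => (n : ℝ) * ∑ u ∈ Finset.powersetCard n (Finset.univ : Finset (Fin N)),
        ∏ i ∈ u, MzvAux.aa s ((i : ℕ) + 1)) Filter.atTop (nhds ((n : ℝ) * mzvRep s n)) :=
    (MzvAux.tendsto_A hs n).const_mul _
  have h2 : Filter.Tendsto
      (fun N => ∑ k ∈ Finset.Icc 1 n, (-1 : ℝ) ^ (k + 1) *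
        (∑ u ∈ Finset.powersetCard (n - k) (Finset.univ : Finset (Fin N)),
          ∏ i ∈ u, MzvAux.aa s ((i : ℕ) + 1)) *
        (∑ i : Fin N, MzvAux.aa s ((i : ℕ) + 1) ^ k)) Filter.atTop
      (nhds (∑ k ∈ Finset.Icc 1 n, (-1 : ℝ) ^ (k + 1) * mzvRep s (n - k) *
        rzeta ((k : ℝ) * s))) := by
    refine tendsto_finset_sum _ fun k hk => ?_
    exact ((MzvAux.tendsto_A hs (n - k)).const_mul _).mul
      (MzvAux.tendsto_P hs k (Finset.mem_Icc.1 hk).1)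
  refine tendsto_nhds_unique ?_ h2
  exact Filter.Tendsto.congr
    (fun N => MzvAux.newton_fin (fun i : Fin N => MzvAux.aa s ((i : ℕ) + 1)) n) h1
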